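/- Water-filling optimality: let T be an n×n Hermitian positive definite matrix with eigendecomposition T = U·Λ·Uᴴ, Λ = diag(λ₁,…,λₙ) with λᵢ > 0, and let a > 0, P > 0. The maximum of log det(I + a·Q·T) over Hermitian positive semidefinite Q with Tr(Q) ≤ nP is attained by Q* = U·diag(q₁,…,qₙ)·Uᴴ with qᵢ = max(μ − 1/(aλᵢ), 0), where μ is chosen so that Σᵢ qᵢ = nP. -/

import Mathlib

open Matrix MeasureTheory Filter
open scoped ComplexOrder Matrix.Norms.L2Operator

/-- Water-filling optimality for maximizing log det(I + a·Q·T) under a trace constraint. -/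
theorem stmt_9 {n : ℕ} (hn : 0 < n) (T U Λ : Matrix (Fin n) (Fin n) ℂ) (hT : T.PosDef)
    (hU : U ∈ Matrix.unitaryGroup (Fin n) ℂ) (lam : Fin n → ℝ) (hlam : ∀ i, 0 < lam i)
    (hΛ : Λ = Matrix.diagonal fun i => (lam i : ℂ)) (hdecomp : T = U * Λ * Uᴴ)
    (a P μ : ℝ) (ha : 0 < a) (hP : 0 < P)
    (hμ : ∑ i, max (μ - 1 / (a * lam i)) 0 = n * P)
    (Qstar : Matrix (Fin n) (Fin n) ℂ)
    (hQstar : Qstar = U * Matrix.diagonal (fun i => ((max (μ - 1 / (a * lam i)) 0 : ℝ) : ℂ)) * Uᴴ) :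
    ∀ Q : Matrix (Fin n) (Fin n) ℂ, Q.PosSemidef → (Matrix.trace Q).re ≤ n * P →
      Real.log (((1 : Matrix (Fin n) (Fin n) ℂ) + (a : ℂ) • (Q * T)).det.re) ≤
      Real.log (((1 : Matrix (Fin n) (Fin n) ℂ) + (a : ℂ) • (Qstar * T)).det.re) := by
  intro Q hQ htr
  -- abbreviations
  set q : Fin n → ℝ := fun i => max (μ - 1 / (a * lam i)) 0 with hqdef
  have hal : ∀ i, 0 < a * lam i := fun i => mul_pos ha (hlam i)
  have hq0 : ∀ i, 0 ≤ q i := fun i => le_max_right _ _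
  set c : Fin n → ℝ := fun i => 1 + a * lam i * q i with hcdef
  have hc : ∀ i, 0 < c i := fun i =>
    add_pos_of_pos_of_nonneg one_pos (mul_nonneg (hal i).le (hq0 i))
  set d : Fin n → ℝ := fun i => (c i)⁻¹ with hddef
  have hd : ∀ i, 0 < d i := fun i => inv_pos.mpr (hc i)
  -- μ is positive
  have hμpos : 0 < μ := by
    by_contra h
    push_neg at h
    have : ∀ i ∈ Finset.univ, q i = 0 := by
      intro i _
      have h1 : 0 < 1 / (a * lam i) := by
        have := hal i
        positivity
      have h2 : μ - 1 / (a * lam i) ≤ 0 := by linarith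
      exact max_eq_right h2
    have h0 : (0:ℝ) = n * P := by
      rw [← hμ]; exact (Finset.sum_eq_zero this).symm
    have : (0:ℝ) < n * P := by positivity
    linarith
  -- unitary facts
  have hUU : Uᴴ * U = 1 := by
    have := hU.1
    rwa [Matrix.star_eq_conjTranspose] at this
  have hUU' : U * Uᴴ = 1 := by
    have := hU.2
    rwa [Matrix.star_eq_conjTranspose] at this
  -- matrices
  set Qt : Matrix (Fin n) (Fin n) ℂ := Uᴴ * Q * U with hQtdef
  have hQtP : Qt.PosSemidef := by
    have := hQ.conjTranspose_mul_mul_same U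
    simpa [hQtdef] using this
  set s : Fin n → ℝ := fun i => Real.sqrt (a * lam i) with hsdef
  set S : Matrix (Fin n) (Fin n) ℂ := Matrix.diagonal (fun i => (s i : ℂ)) with hSdef
  have hSH : Sᴴ = S := by
    simp [hSdef, Matrix.diagonal_conjTranspose]
  have hSS : S * S = Matrix.diagonal (fun i => ((a * lam i : ℝ) : ℂ)) := by
    rw [hSdef, Matrix.diagonal_mul_diagonal]
    refine congrArg _ (funext fun i => ?_)
    norm_cast
    exact Real.mul_self_sqrt (hal i).le
  set W : Matrix (Fin n) (Fin n) ℂ := S * Qt * S with hWdef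
  have hW : W.PosSemidef := by
    have := hQtP.conjTranspose_mul_mul_same S
    rwa [hSH, ← hWdef] at this
  set X : Matrix (Fin n) (Fin n) ℂ := 1 + W with hXdef
  have hX : X.PosDef := Matrix.PosDef.one.add_posSemidef hW
  set r : Fin n → ℝ := fun i => Real.sqrt (d i) with hrdef
  set R : Matrix (Fin n) (Fin n) ℂ := Matrix.diagonal (fun i => (r i : ℂ)) with hRdef
  have hRH : Rᴴ = R := by
    simp [hRdef, Matrix.diagonal_conjTranspose]
  have hRR : R * R = Matrix.diagonal (fun i => ((d i : ℝ) : ℂ)) := by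
    rw [hRdef, Matrix.diagonal_mul_diagonal]
    refine congrArg _ (funext fun i => ?_)
    norm_cast
    exact Real.mul_self_sqrt (hd i).le
  set Y : Matrix (Fin n) (Fin n) ℂ := R * X * R with hYdef
  have hY : Y.PosDef := by
    have h1 : Y = Matrix.diagonal (fun i => ((d i : ℝ) : ℂ)) + R * W * R := by
      rw [hYdef, hXdef, Matrix.mul_add, Matrix.add_mul, Matrix.mul_one, hRR]
    rw [h1]
    refine (Matrix.PosDef.diagonal fun i => ?_).add_posSemidef ?_
    · exact_mod_cast Complex.zero_lt_real.mpr (hd i)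
    · have := hW.conjTranspose_mul_mul_same R
      rwa [hRH] at this
  set ev : Fin n → ℝ := hY.1.eigenvalues with hevdef
  have hev : ∀ i, 0 < ev i := fun i => hY.eigenvalues_pos i
  -- trace of Y equals sum of eigenvalues
  have htrY : Y.trace = ∑ i, (ev i : ℂ) := by
    conv_lhs => rw [hY.1.spectral_theorem]
    rw [Unitary.conjStarAlgAut_apply, Matrix.trace_mul_cycle]
    have h1 : (star (hY.1.eigenvectorUnitary : Matrix (Fin n) (Fin n) ℂ)) *
        (hY.1.eigenvectorUnitary : Matrix (Fin n) (Fin n) ℂ) = 1 :=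
      (Matrix.mem_unitaryGroup_iff').mp (hY.1.eigenvectorUnitary).2
    rw [h1, Matrix.one_mul, Matrix.trace_diagonal]
    rfl
  -- determinant of Y
  have hdetY : Y.det = ∏ i, (ev i : ℂ) := hY.1.det_eq_prod_eigenvalues
  -- relation between det X and det Y
  have hdX2 : X.det = ((∏ i, c i) * ∏ i, ev i : ℝ) := by
    have hdetR : R.det = ∏ i, (r i : ℂ) := by simp [hRdef, Matrix.det_diagonal]
    have h1 : Y.det = (∏ i, (r i : ℂ)) * X.det * ∏ i, (r i : ℂ) := by
      rw [hYdef, Matrix.det_mul, Matrix.det_mul, hdetR]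
    have h2 : (∏ i, (r i : ℂ)) * (∏ i, (r i : ℂ)) = ((∏ i, d i : ℝ) : ℂ) := by
      rw [← Finset.prod_mul_distrib, Complex.ofReal_prod]
      refine Finset.prod_congr rfl fun i _ => ?_
      norm_cast
      exact Real.mul_self_sqrt (hd i).le
    have h3 : ((∏ i, c i : ℝ) : ℂ) * ((∏ i, d i : ℝ) : ℂ) = 1 := by
      rw [← Complex.ofReal_mul, ← Finset.prod_mul_distrib]
      have : ∀ i ∈ Finset.univ, c i * d i = 1 := fun i _ =>
        mul_inv_cancel₀ (hc i).ne'
      rw [Finset.prod_congr rfl this]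
      simp
    have h4 : ((∏ i, d i : ℝ) : ℂ) * X.det = Y.det := by
      rw [h1, ← h2]; ring
    calc X.det = (((∏ i, c i : ℝ)) : ℂ) * (((∏ i, d i : ℝ) : ℂ) * X.det) := by
          rw [← mul_assoc, h3, one_mul]
      _ = ((∏ i, c i : ℝ) : ℂ) * Y.det := by rw [h4]
      _ = ((∏ i, c i) * ∏ i, ev i : ℝ) := by
          rw [hdetY]
          push_cast
          ring
  -- LHS determinant
  have hLHS : ((1 : Matrix (Fin n) (Fin n) ℂ) + (a : ℂ) • (Q * T)).det = X.det := by
    have hdiag : (a : ℂ) • Matrix.diagonal (fun i => (lam i : ℂ)) = S * S := by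
      rw [hSS, ← Matrix.diagonal_smul]
      refine congrArg _ (funext fun i => ?_)
      simp
    have h1 : ((1 : Matrix (Fin n) (Fin n) ℂ) + (a : ℂ) • (Q * T)) =
        1 + (Q * U * S) * (S * Uᴴ) := by
      rw [hdecomp, hΛ]
      congr 1
      have h2 : (a : ℂ) • (Q * (U * Matrix.diagonal (fun i => (lam i : ℂ)) * Uᴴ)) =
          Q * U * ((a : ℂ) • Matrix.diagonal (fun i => (lam i : ℂ))) * Uᴴ := by
        simp only [Matrix.mul_smul, Matrix.smul_mul, Matrix.mul_assoc]
      rw [h2, hdiag]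
      simp [Matrix.mul_assoc]
    rw [h1, Matrix.det_one_add_mul_comm]
    congr 1
    simp [hXdef, hWdef, hQtdef, Matrix.mul_assoc]
  -- RHS determinant
  have hRHS : ((1 : Matrix (Fin n) (Fin n) ℂ) + (a : ℂ) • (Qstar * T)).det = ((∏ i, c i : ℝ) : ℂ) := by
    have hcanc : ∀ M : Matrix (Fin n) (Fin n) ℂ, Uᴴ * (U * M) = M := fun M => by
      rw [← Matrix.mul_assoc, hUU, Matrix.one_mul]
    set D : Matrix (Fin n) (Fin n) ℂ := Matrix.diagonal (fun i => ((q i : ℝ) : ℂ)) with hDdef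
    set L : Matrix (Fin n) (Fin n) ℂ := Matrix.diagonal (fun i => (lam i : ℂ)) with hLdef
    have emid : (U * D * Uᴴ) * (U * L * Uᴴ) = U * (D * L) * Uᴴ := by
      simp only [Matrix.mul_assoc]
      rw [hcanc]
    have e1 : (a : ℂ) • (Qstar * T) = (U * (D * ((a : ℂ) • L))) * Uᴴ := by
      rw [hQstar, hdecomp, hΛ, emid]
      simp only [Matrix.mul_smul, Matrix.smul_mul, Matrix.mul_assoc]
    rw [e1, Matrix.det_one_add_mul_comm, hcanc]
    have e2 : (1 : Matrix (Fin n) (Fin n) ℂ) + D * ((a : ℂ) • L) =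
        Matrix.diagonal (fun i => ((c i : ℝ) : ℂ)) := by
      rw [hDdef, hLdef, Matrix.mul_smul, Matrix.diagonal_mul_diagonal]
      rw [← Matrix.diagonal_smul, ← Matrix.diagonal_one, Matrix.diagonal_add]
      refine congrArg _ (funext fun i => ?_)
      simp [hcdef]
      push_cast
      ring
    rw [e2, Matrix.det_diagonal, Complex.ofReal_prod]
  -- diagonal entries of Qt
  have hdiagQt : ∀ i, 0 ≤ Qt i i := by
    intro i
    exact hQtP.diag_nonneg
  have ht0 : ∀ i, 0 ≤ (Qt i i).re := fun i => by
    simpa using (Complex.le_def.mp (hdiagQt i)).1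
  have htrQt : (∑ i, (Qt i i).re) ≤ n * P := by
    have h1 : Qt.trace = Q.trace := by
      rw [hQtdef, Matrix.trace_mul_cycle, hUU', Matrix.one_mul]
    have h2 : (∑ i, (Qt i i).re) = Qt.trace.re := by
      show _ = (∑ i, Qt.diag i).re
      rw [Complex.re_sum]
      rfl
    rw [h2, h1]
    exact htr
  -- trace of Y in real terms
  have hentry : ∀ i, Y i i = ((d i : ℝ) : ℂ) * (1 + ((a * lam i : ℝ) : ℂ) * Qt i i) := by
    intro i
    have hr2 : (r i : ℂ) * (r i : ℂ) = ((d i : ℝ) : ℂ) := by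
      norm_cast; exact Real.mul_self_sqrt (hd i).le
    have hs2 : (s i : ℂ) * (s i : ℂ) = ((a * lam i : ℝ) : ℂ) := by
      norm_cast; exact Real.mul_self_sqrt (hal i).le
    have e1 : Y i i = (r i : ℂ) * (1 + (s i : ℂ) * Qt i i * (s i : ℂ)) * (r i : ℂ) := by
      simp [hYdef, hXdef, hWdef, hSdef, hRdef, Matrix.mul_diagonal, Matrix.diagonal_mul,
        Matrix.add_apply, Matrix.one_apply_eq]
    rw [e1, ← hr2, ← hs2]
    ring
  have htrYre : Y.trace.re = ∑ i, d i * (1 + (a * lam i) * (Qt i i).re) := by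
    show (∑ i, Y.diag i).re = _
    have h0 : ∑ i, Y.diag i = ∑ i, Y i i := rfl
    rw [h0, Finset.sum_congr rfl fun i _ => hentry i, Complex.re_sum]
    refine Finset.sum_congr rfl fun i _ => ?_
    rw [Complex.re_ofReal_mul]
    congr 1
    simp [Complex.add_re, Complex.re_ofReal_mul]
  -- key per-index inequality
  have hkey : ∀ i, d i * (1 + (a * lam i) * (Qt i i).re) ≤ 1 + ((Qt i i).re - q i) / μ := by
    intro i
    set t := (Qt i i).re with htdef
    have ht := ht0 i
    rcases le_or_gt μ (1 / (a * lam i)) with h | h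
    · have hqi : q i = 0 := max_eq_right (by linarith)
      have hdi : d i = 1 := by
        have h1 : c i = 1 := by
          have h2 : c i = 1 + a * lam i * q i := rfl
          rw [h2, hqi]; ring
        have h2 : d i = (c i)⁻¹ := rfl
        rw [h2, h1]; norm_num
      have hbound : a * lam i ≤ 1 / μ := by
        rw [le_div_iff₀ hμpos]
        calc a * lam i * μ ≤ a * lam i * (1 / (a * lam i)) :=
              mul_le_mul_of_nonneg_left h (hal i).le
          _ = 1 := by rw [mul_one_div, div_self (hal i).ne']
      calc d i * (1 + a * lam i * t) = 1 + (a * lam i) * t := by rw [hdi]; ring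
        _ ≤ 1 + (1 / μ) * t := by
            exact add_le_add_right (mul_le_mul_of_nonneg_right hbound ht) 1
        _ = 1 + (t - q i) / μ := by rw [hqi]; ring
    · have hq' : 0 < μ - 1 / (a * lam i) := by linarith
      have hqi : q i = μ - 1 / (a * lam i) := max_eq_left hq'.le
      have hci : c i = a * lam i * μ := by
        have h2 : c i = 1 + a * lam i * q i := rfl
        have hne : a * lam i ≠ 0 := (hal i).ne'
        rw [h2, hqi]
        have hl : lam i ≠ 0 := (hlam i).ne'
        have ha' : a ≠ 0 := ha.ne'
        field_simp
        ring
      have heq : d i * (1 + a * lam i * t) = 1 + (t - q i) / μ := by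
        have hd' : d i = (a * lam i * μ)⁻¹ := by
          have h2 : d i = (c i)⁻¹ := rfl
          rw [h2, hci]
        have hne : a * lam i ≠ 0 := (hal i).ne'
        have hne2 : μ ≠ 0 := hμpos.ne'
        rw [hd', hqi]
        have hl : lam i ≠ 0 := (hlam i).ne'
        have ha' : a ≠ 0 := ha.ne'
        field_simp
        ring
      exact le_of_eq heq
  have hsumev : (∑ i, ev i) ≤ n := by
    have h1 : Y.trace.re = ∑ i, ev i := by
      rw [htrY]
      push_cast
      simp
    rw [← h1, htrYre]
    calc ∑ i, d i * (1 + (a * lam i) * (Qt i i).re)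
        ≤ ∑ i, (1 + ((Qt i i).re - q i) / μ) := Finset.sum_le_sum fun i _ => hkey i
      _ = n + ((∑ i, (Qt i i).re) - ∑ i, q i) / μ := by
          rw [Finset.sum_add_distrib, ← Finset.sum_div, Finset.sum_sub_distrib]
          simp
      _ ≤ n + 0 := by
          have : (∑ i, (Qt i i).re) - ∑ i, q i ≤ 0 := by
            rw [hμ]; linarith [htrQt]
          have := div_nonpos_of_nonpos_of_nonneg this hμpos.le
          linarith
      _ = n := by ring
  have hlogev : (∑ i, Real.log (ev i)) ≤ 0 := by
    calc ∑ i, Real.log (ev i) ≤ ∑ i, (ev i - 1) :=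
          Finset.sum_le_sum fun i _ => Real.log_le_sub_one_of_pos (hev i)
      _ = (∑ i, ev i) - n := by rw [Finset.sum_sub_distrib]; simp
      _ ≤ 0 := by linarith [hsumev]
  -- finish
  have hcprod : 0 < ∏ i, c i := Finset.prod_pos fun i _ => hc i
  have hevprod : 0 < ∏ i, ev i := Finset.prod_pos fun i _ => hev i
  rw [hLHS, hRHS, hdX2, Complex.ofReal_re, Complex.ofReal_re,
    Real.log_mul hcprod.ne' hevprod.ne']
  have : Real.log (∏ i, ev i) ≤ 0 := by
    rw [Real.log_prod fun i _ => (hev i).ne']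
    exact hlogev
  linarith
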